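/- For every real number θ with π/6 ≤ θ ≤ π/3, one has (cos(π/6) − cos(π/6 + θ) + cos(7π/12 − θ) + cos θ) / 2 > 2 · sin(θ / 2). -/

import Mathlib

open Real

theorem stmt_10 (θ : ℝ) (hθ : π / 6 ≤ θ) (hθ' : θ ≤ π / 3) :
    (cos (π / 6) - cos (π / 6 + θ) + cos (7 * π / 12 - θ) + cos θ) / 2
      > 2 * sin (θ / 2) := by
  have hπ : (0:ℝ) < π := Real.pi_pos
  set f : ℝ → ℝ := fun x =>
    (cos (π / 6) - cos (π / 6 + x) + cos (7 * π / 12 - x) + cos x) / 2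
      - 2 * sin (x / 2) with hf
  -- derivative
  have hd : ∀ x : ℝ, HasDerivAt f
      ((sin (π / 6 + x) + sin (7 * π / 12 - x) - sin x) / 2 - cos (x / 2)) x := by
    intro x
    have h1 : HasDerivAt (fun x : ℝ => cos (π / 6 + x)) (-sin (π / 6 + x)) x := by
      simpa [Function.comp_def] using (Real.hasDerivAt_cos (π / 6 + x)).comp x
        ((hasDerivAt_id x).const_add (π / 6))
    have h2 : HasDerivAt (fun x : ℝ => cos (7 * π / 12 - x)) (sin (7 * π / 12 - x)) x := by
      simpa [Function.comp_def] using (Real.hasDerivAt_cos (7 * π / 12 - x)).comp x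
        ((hasDerivAt_id x).const_sub (7 * π / 12))
    have h3 : HasDerivAt (fun x : ℝ => cos x) (-sin x) x := Real.hasDerivAt_cos x
    have h4 : HasDerivAt (fun x : ℝ => 2 * sin (x / 2)) (cos (x / 2)) x := by
      have : HasDerivAt (fun x : ℝ => sin (x / 2)) (cos (x / 2) * (1 / 2)) x := by
        simpa [Function.comp_def] using (Real.hasDerivAt_sin (x / 2)).comp x ((hasDerivAt_id x).div_const 2)
      have := this.const_mul 2
      convert this using 1
      · rfl
      · rfl
      ring
    have := ((((hasDerivAt_const x (cos (π / 6))).sub h1).add h2).add h3).div_const 2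
      |>.sub h4
    convert this using 1
    · rfl
    · rfl
    · rfl
    ring
  have hsqrt3 : (17:ℝ) / 10 < Real.sqrt 3 := by
    nlinarith [Real.sq_sqrt (by norm_num : (0:ℝ) ≤ 3), Real.sqrt_nonneg 3]
  have hsqrt2 : (14:ℝ) / 10 < Real.sqrt 2 := by
    nlinarith [Real.sq_sqrt (by norm_num : (0:ℝ) ≤ 2), Real.sqrt_nonneg 2]
  -- f is strictly decreasing on the interval
  have hanti : StrictAntiOn f (Set.Icc (π / 6) (π / 3)) := by
    apply strictAntiOn_of_deriv_neg (convex_Icc _ _)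
    · apply Continuous.continuousOn
      fun_prop
    · intro x hx
      rw [interior_Icc] at hx
      obtain ⟨hx1, hx2⟩ := hx
      rw [(hd x).deriv]
      have hs1 : sin (π / 6 + x) ≤ 1 := Real.sin_le_one _
      have hs2 : sin (7 * π / 12 - x) ≤ 1 := Real.sin_le_one _
      have hs3 : (1:ℝ) / 2 < sin x := by
        have := Real.strictMonoOn_sin (by constructor <;> nlinarith)
          (by constructor <;> nlinarith : x ∈ Set.Icc (-(π/2)) (π/2)) hx1
        rwa [Real.sin_pi_div_six] at this
      have hc : cos (π / 6) ≤ cos (x / 2) := by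
        apply Real.cos_le_cos_of_nonneg_of_le_pi (by nlinarith) (by nlinarith)
        nlinarith
      rw [Real.cos_pi_div_six] at hc
      linarith
  -- value at π/3
  have hend : 0 < f (π / 3) := by
    have e1 : π / 6 + π / 3 = π / 2 := by ring
    have e2 : 7 * π / 12 - π / 3 = π / 4 := by ring
    have e3 : π / 3 / 2 = π / 6 := by ring
    simp only [hf, e1, e2, e3, Real.cos_pi_div_two, Real.cos_pi_div_four,
      Real.cos_pi_div_three, Real.cos_pi_div_six, Real.sin_pi_div_six]
    nlinarith
  have hmem : θ ∈ Set.Icc (π / 6) (π / 3) := ⟨hθ, hθ'⟩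
  have hmem' : π / 3 ∈ Set.Icc (π / 6) (π / 3) := ⟨by linarith, le_refl _⟩
  have : f (π / 3) ≤ f θ := hanti.antitoneOn hmem hmem' hθ'
  have : 0 < f θ := lt_of_lt_of_le hend this
  simpa [hf, sub_pos] using this
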